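/- For every natural number n > 1, S(n)/n ≥ log(n/2)/log 3, where log denotes the natural logarithm (on the real numbers). -/

import Mathlib

/-- The height function: H(1) = 0 and H(n) = H(φ(n)) + 1 for n ≥ 2. -/
def H : ℕ → ℕ
  | 0 => 0
  | 1 => 0
  | n + 2 => H (Nat.totient (n + 2)) + 1
  decreasing_by exact Nat.totient_lt _ (by omega)

/-- The sum-of-heights function S(n) = ∑_{k=1}^n H(k). -/
def S (n : ℕ) : ℕ := ∑ k ∈ Finset.Icc 1 n, H k

lemma H_eq (n : ℕ) (hn : 2 ≤ n) : H n = H n.totient + 1 := by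
  obtain ⟨m, rfl⟩ : ∃ m, n = m + 2 := ⟨n - 2, by omega⟩
  simp [H]

lemma H_pos (n : ℕ) (hn : 2 ≤ n) : 1 ≤ H n := by rw [H_eq n hn]; omega

lemma H_one : H 1 = 0 := by simp [H]

lemma H_two : H 2 = 1 := by
  rw [H_eq 2 le_rfl]; norm_num [H_one]

-- doubling an even number
lemma H_double_even : ∀ k, 2 ≤ k → Even k → H (2 * k) = H k + 1 := by
  intro k
  induction k using Nat.strong_induction_on with
  | _ k ih =>
    intro h2 he
    rcases eq_or_lt_of_le h2 with h | h
    · have hk : k = 2 := h.symm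
      subst hk
      rw [show (2*2 : ℕ) = 4 by norm_num, H_eq 4 (by norm_num), show Nat.totient 4 = 2 by decide, H_two]
    · have h3 : 2 < k := h
      have hdvd : (2:ℕ) ∣ k := he.two_dvd
      have htot : (2 * k).totient = 2 * k.totient :=
        Nat.totient_mul_of_prime_of_dvd Nat.prime_two hdvd
      have hte : Even k.totient := Nat.totient_even h3
      have htp : 1 ≤ k.totient := Nat.totient_pos.mpr (by omega)
      have ht2 : 2 ≤ k.totient := by
        rcases hte with ⟨t, ht⟩; omega
      have hlt : k.totient < k := Nat.totient_lt k (by omega)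
      rw [H_eq (2 * k) (by omega), htot, ih k.totient hlt ht2 hte, ← H_eq k (by omega)]

/-- `K n = H (2n)`; this is Shapiro's completely additive function shifted by 1. -/
def K (n : ℕ) : ℕ := H (2 * n)

lemma K_one : K 1 = 1 := by simp [K, H_two]

lemma K_pos (n : ℕ) (h : 1 ≤ n) : 1 ≤ K n := H_pos _ (by omega)

lemma K_double (m : ℕ) (hm : 1 ≤ m) : K (2 * m) = K m + 1 := by
  unfold K
  rw [show 2 * (2 * m) = 2 * (2 * m) from rfl]
  exact H_double_even (2 * m) (by omega) ⟨m, by ring⟩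

lemma K_odd (n : ℕ) (h3 : 3 ≤ n) (ho : Odd n) : K n = H n := by
  have hcop : Nat.Coprime 2 n := (Nat.coprime_two_left).mpr ho
  have : (2 * n).totient = n.totient := by
    rw [Nat.totient_mul hcop, Nat.totient_two, one_mul]
  rw [K, H_eq (2 * n) (by omega), this, ← H_eq n (by omega)]

lemma totient_halves (n : ℕ) (h3 : 3 ≤ n) :
    n.totient = 2 * (n.totient / 2) ∧ 1 ≤ n.totient / 2 := by
  have he : Even n.totient := Nat.totient_even (by omega)
  have hp : 1 ≤ n.totient := Nat.totient_pos.mpr (by omega)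
  rcases he with ⟨t, ht⟩
  constructor <;> omega

/-- For odd n ≥ 3 : K n = K (φ n / 2) + 1. -/
lemma K_odd_step (n : ℕ) (h3 : 3 ≤ n) (ho : Odd n) :
    K n = K (n.totient / 2) + 1 := by
  obtain ⟨h2t, ht1⟩ := totient_halves n h3
  rw [K_odd n h3 ho, H_eq n (by omega)]
  congr 1
  rw [show H n.totient = H (2 * (n.totient / 2)) by rw [← h2t]]
  rfl

/-- For an odd prime p : K p = K ((p-1)/2) + 1. -/
lemma K_prime_step (p : ℕ) (hp : p.Prime) (h3 : 3 ≤ p) :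
    K p = K ((p - 1) / 2) + 1 := by
  have := K_odd_step p h3 (hp.odd_of_ne_two (by omega))
  rwa [Nat.totient_prime hp] at this

lemma mu_lt (a b c d : ℕ) (hb : 1 ≤ b) (h : a * b < c * d) :
    a * b * (a * b) + a < c * d * (c * d) + c := by
  have ha : a ≤ a * b := Nat.le_mul_of_pos_right a hb
  nlinarith

/-- Complete additivity of `K` (Shapiro's theorem, shifted form). -/
lemma K_add_aux : ∀ N m n, 1 ≤ m → 1 ≤ n → m * n * (m * n) + m ≤ N →
    K (m * n) + 1 = K m + K n := by
  intro N
  induction N using Nat.strong_induction_on with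
  | _ N ih =>
    intro m n hm hn hμ
    -- trivial cases
    rcases eq_or_lt_of_le hm with h1 | hm2
    · rw [← h1, one_mul, K_one]; omega
    rcases eq_or_lt_of_le hn with h1 | hn2
    · rw [← h1, mul_one, K_one]
    have hm2 : 2 ≤ m := hm2
    have hn2 : 2 ≤ n := hn2
    rcases Nat.even_or_odd m with hme | hmo
    · -- m even
      obtain ⟨m', rfl⟩ : ∃ m', m = 2 * m' := ⟨m / 2, by rcases hme with ⟨t, ht⟩; omega⟩
      have hm' : 1 ≤ m' := by omega
      have e1 : K (2 * m' * n) = K (m' * n) + 1 := by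
        rw [mul_assoc]; exact K_double _ (Nat.mul_pos (by omega) (by omega))
      have e2 : K (2 * m') = K m' + 1 := K_double _ hm'
      have lt1 : m' * n * (m' * n) + m' < N := by
        calc m' * n * (m' * n) + m' < 2 * m' * n * (2 * m' * n) + 2 * m' :=
              mu_lt _ _ _ _ hn (by nlinarith)
          _ ≤ N := hμ
      have e3 := ih _ lt1 m' n hm' hn le_rfl
      omega
    rcases Nat.even_or_odd n with hne | hno
    · -- n even
      obtain ⟨n', rfl⟩ : ∃ n', n = 2 * n' := ⟨n / 2, by rcases hne with ⟨t, ht⟩; omega⟩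
      have hn' : 1 ≤ n' := by omega
      have e1 : K (m * (2 * n')) = K (m * n') + 1 := by
        rw [show m * (2 * n') = 2 * (m * n') by ring]; exact K_double _ (Nat.mul_pos (by omega) (by omega))
      have e2 : K (2 * n') = K n' + 1 := K_double _ hn'
      have lt1 : m * n' * (m * n') + m < N := by
        calc m * n' * (m * n') + m < m * (2 * n') * (m * (2 * n')) + m :=
              mu_lt _ _ _ _ hn' (by nlinarith)
          _ ≤ N := hμ
      have e3 := ih _ lt1 m n' hm hn' le_rfl
      omega
    -- both odd, ≥ 3
    have hm3 : 3 ≤ m := by rcases hmo with ⟨t, ht⟩; omega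
    have hn3 : 3 ≤ n := by rcases hno with ⟨t, ht⟩; omega
    obtain ⟨h2t, ht1⟩ := totient_halves n hn3
    set t := n.totient / 2 with hts
    have htlt : n.totient < n := Nat.totient_lt n (by omega)
    have hKn : K n = K t + 1 := K_odd_step n hn3 hno
    by_cases hmp : m.Prime
    · -- m an odd prime
      have hmn3 : 3 ≤ m * n := by nlinarith
      have hmno : Odd (m * n) := hmo.mul hno
      have hKmn : K (m * n) = H ((m * n).totient) + 1 := by
        rw [K_odd _ hmn3 hmno, H_eq _ (by omega)]
      by_cases hdvd : m ∣ n
      · -- m ∣ n : φ(mn) = m * φ(n)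
        have htot : (m * n).totient = m * n.totient :=
          Nat.totient_mul_of_prime_of_dvd hmp hdvd
        have e1 : K (m * n) = K (m * t) + 1 := by
          rw [hKmn, htot, h2t, show m * (2 * t) = 2 * (m * t) by ring]; rfl
        have lt1 : m * t * (m * t) + m < N := by
          calc m * t * (m * t) + m < m * n * (m * n) + m :=
                mu_lt _ _ _ _ ht1 (mul_lt_mul_of_pos_left (by omega) (show (0:ℕ) < m by omega))
            _ ≤ N := hμ
        have e2 := ih _ lt1 m t (by omega) ht1 le_rfl
        omega
      · -- m ∤ n : φ(mn) = (m-1) * φ(n)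
        have hcop : Nat.Coprime m n := (Nat.Prime.coprime_iff_not_dvd hmp).mpr hdvd
        have htot : (m * n).totient = (m - 1) * n.totient := by
          rw [Nat.totient_mul hcop, Nat.totient_prime hmp]
        obtain ⟨q, hq⟩ : ∃ q, m - 1 = 2 * q := ⟨(m - 1) / 2, by rcases hmo with ⟨s, hs⟩; omega⟩
        have hq1 : 1 ≤ q := by omega
        have e1 : K (m * n) = K (q * n.totient) + 1 := by
          rw [hKmn, htot, hq, show 2 * q * n.totient = 2 * (q * n.totient) by ring]; rfl
        have lt1 : q * n.totient * (q * n.totient) + q < N := by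
          calc q * n.totient * (q * n.totient) + q < m * n * (m * n) + m :=
                mu_lt _ _ _ _ (by omega) (mul_lt_mul'' (show q < m by omega) htlt (Nat.zero_le _) (Nat.zero_le _))
            _ ≤ N := hμ
        have e2 := ih _ lt1 q n.totient hq1 (by omega) le_rfl
        have e3 : K n.totient = K t + 1 := by
          rw [h2t]; exact K_double _ ht1
        have e4 : K m = K q + 1 := by
          have := K_prime_step m hmp hm3
          rwa [hq, Nat.mul_div_cancel_left q (by norm_num)] at this
        omega
    · -- m odd composite
      obtain ⟨p, hps⟩ : ∃ p, p = m.minFac := ⟨_, rfl⟩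
      have hp : p.Prime := hps ▸ Nat.minFac_prime (show m ≠ 1 by omega)
      obtain ⟨m', hm'⟩ : p ∣ m := hps ▸ Nat.minFac_dvd m
      have hm'1 : m' ≠ 1 := by
        intro h; rw [h, mul_one] at hm'; exact hmp (hm' ▸ hp)
      have hm'2 : 2 ≤ m' := by
        rcases Nat.eq_zero_or_pos m' with h | h
        · subst h; rw [mul_zero] at hm'; omega
        · omega
      have hplt : p < m := by nlinarith [hp.two_le]
      have hm'lt : m' < m := by nlinarith [hp.two_le]
      have e1 : K (p * (m' * n)) + 1 = K p + K (m' * n) := by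
        apply ih _ _ p (m' * n) hp.one_le (Nat.mul_pos (by omega) (by omega)) le_rfl
        calc p * (m' * n) * (p * (m' * n)) + p = m * n * (m * n) + p := by rw [hm']; ring
          _ < m * n * (m * n) + m := by omega
          _ ≤ N := hμ
      have e2 : K (m' * n) + 1 = K m' + K n := by
        apply ih _ _ m' n (by omega) (by omega) le_rfl
        calc m' * n * (m' * n) + m' < m * n * (m * n) + m :=
              mu_lt _ _ _ _ (by omega) (mul_lt_mul_of_pos_right hm'lt (show (0:ℕ) < n by omega))
          _ ≤ N := hμ
      have e3 : K (p * m') + 1 = K p + K m' := by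
        apply ih _ _ p m' hp.one_le (by omega) le_rfl
        calc p * m' * (p * m') + p = m * m + p := by rw [← hm']
          _ < m * n * (m * n) + m := by
              have h1 : m ≤ m * n := Nat.le_mul_of_pos_right m (by omega)
              have h2 : m * m ≤ m * n * (m * n) := Nat.mul_le_mul h1 h1
              omega
          _ ≤ N := hμ
      have e4 : K (m * n) = K (p * (m' * n)) := by rw [hm', mul_assoc]
      have e5 : K m = K (p * m') := by rw [hm']
      omega

lemma K_add (m n : ℕ) (hm : 1 ≤ m) (hn : 1 ≤ n) : K (m * n) + 1 = K m + K n :=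
  K_add_aux _ m n hm hn le_rfl

/-- Key bound: 3n ≤ 3^(K n). -/
lemma K_bound : ∀ n, 1 ≤ n → 3 * n ≤ 3 ^ K n := by
  intro n
  induction n using Nat.strong_induction_on with
  | _ n ih =>
    intro hn
    rcases eq_or_lt_of_le hn with h1 | hn2
    · rw [← h1, K_one]; norm_num
    have hn2 : 2 ≤ n := hn2
    rcases Nat.even_or_odd n with hne | hno
    · obtain ⟨m, rfl⟩ : ∃ m, n = 2 * m := ⟨n / 2, by rcases hne with ⟨t, ht⟩; omega⟩
      have hm1 : 1 ≤ m := by omega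
      have := ih m (by omega) hm1
      rw [K_double m hm1, pow_succ]
      nlinarith
    by_cases hp : n.Prime
    · -- odd prime
      obtain ⟨q, hq⟩ : ∃ q, n - 1 = 2 * q := ⟨(n - 1) / 2, by rcases hno with ⟨s, hs⟩; omega⟩
      have hq1 : 1 ≤ q := by omega
      have hKn : K n = K q + 1 := by
        have := K_prime_step n hp (by omega)
        rwa [hq, Nat.mul_div_cancel_left q (by norm_num)] at this
      have := ih q (by omega) hq1
      have hn' : n = 2 * q + 1 := by omega
      rw [hKn, pow_succ]
      omega
    · -- odd composite
      obtain ⟨p, hps⟩ : ∃ p, p = n.minFac := ⟨_, rfl⟩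
      have hpp : p.Prime := hps ▸ Nat.minFac_prime (show n ≠ 1 by omega)
      obtain ⟨m, hm⟩ : p ∣ n := hps ▸ Nat.minFac_dvd n
      have hm1 : m ≠ 1 := by
        intro h; rw [h, mul_one] at hm; exact hp (hm ▸ hpp)
      have hm2 : 2 ≤ m := by
        rcases Nat.eq_zero_or_pos m with h | h
        · subst h; rw [mul_zero] at hm; omega
        · omega
      have hplt : p < n := by nlinarith [hpp.two_le]
      have hmlt : m < n := by nlinarith [hpp.two_le]
      have hadd : K n + 1 = K p + K m := by rw [hm]; exact K_add p m hpp.one_le (by omega)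
      have b1 := ih p hplt hpp.one_le
      have b2 := ih m hmlt (by omega)
      have key : 3 ^ (K n + 1) = 3 ^ K p * 3 ^ K m := by rw [hadd, pow_add]
      have : 3 * (3 * n) ≤ 3 ^ (K n + 1) := by
        rw [key, hm]
        calc 3 * (3 * (p * m)) = (3 * p) * (3 * m) := by ring
          _ ≤ 3 ^ K p * 3 ^ K m := Nat.mul_le_mul b1 b2
      rw [pow_succ] at this
      omega

/-- Pointwise bound: 3n ≤ 2·3^(H n) for n ≥ 2. -/
lemma H_bound (n : ℕ) (hn : 2 ≤ n) : 3 * n ≤ 2 * 3 ^ H n := by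
  rcases Nat.even_or_odd n with hne | hno
  · obtain ⟨m, rfl⟩ : ∃ m, n = 2 * m := ⟨n / 2, by rcases hne with ⟨t, ht⟩; omega⟩
    have hm1 : 1 ≤ m := by omega
    have : 3 * m ≤ 3 ^ K m := K_bound m hm1
    have hH : H (2 * m) = K m := rfl
    rw [hH]; omega
  · have h3 : 3 ≤ n := by rcases hno with ⟨t, ht⟩; omega
    have : 3 * n ≤ 3 ^ K n := K_bound n (by omega)
    rw [← K_odd n h3 hno]; omega

lemma log3_pos : (0:ℝ) < Real.log 3 := Real.log_pos (by norm_num)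

lemma one_le_log3 : (1:ℝ) ≤ Real.log 3 := by
  rw [Real.le_log_iff_exp_le (by norm_num)]
  exact le_of_lt (lt_of_lt_of_le Real.exp_one_lt_d9 (by norm_num))

/-- Real pointwise bound: log(k/2)/log 3 + 1 ≤ H k for k ≥ 2. -/
lemma H_real (k : ℕ) (hk : 2 ≤ k) :
    Real.log ((k : ℝ) / 2) / Real.log 3 + 1 ≤ (H k : ℝ) := by
  have hnat := H_bound k hk
  have hcast : (3:ℝ) * k ≤ 2 * 3 ^ H k := by exact_mod_cast hnat
  have hk0 : (0:ℝ) < k := by positivity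
  have h1 : (k:ℝ) / 2 ≤ (3:ℝ) ^ H k / 3 := by linarith
  have h2 : Real.log ((k:ℝ) / 2) ≤ (H k : ℝ) * Real.log 3 - Real.log 3 := by
    calc Real.log ((k:ℝ) / 2) ≤ Real.log ((3:ℝ) ^ H k / 3) :=
          (Real.log_le_log_iff (by positivity) (by positivity)).mpr h1
      _ = Real.log ((3:ℝ) ^ H k) - Real.log 3 := Real.log_div (by positivity) (by norm_num)
      _ = (H k : ℝ) * Real.log 3 - Real.log 3 := by rw [Real.log_pow]
  have h3 : Real.log ((k:ℝ) / 2) ≤ ((H k : ℝ) - 1) * Real.log 3 := by linarith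
  have h4 : Real.log ((k:ℝ) / 2) / Real.log 3 ≤ (H k : ℝ) - 1 :=
    (div_le_iff₀ log3_pos).mpr (by linarith)
  linarith

lemma S_succ (n : ℕ) : S (n + 1) = S n + H (n + 1) :=
  Finset.sum_Icc_succ_top (by omega) H

theorem sum_heights_lower_bound (n : ℕ) (hn : 1 < n) :
    Real.log ((n : ℝ) / 2) / Real.log 3 ≤ (S n : ℝ) / (n : ℝ) := by
  induction n, hn using Nat.le_induction with
  | base =>
    have : Real.log ((2:ℕ) / 2 : ℝ) = 0 := by norm_num
    rw [show (((2:ℕ)):ℝ) = 2 by norm_num]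
    norm_num
    positivity
  | succ n hn ih =>
    have hn0 : (0:ℝ) < n := by positivity
    have hn10 : (0:ℝ) < (n:ℝ) + 1 := by positivity
    set a := Real.log 3 with ha
    have ha0 : 0 < a := log3_pos
    have ha1 : 1 ≤ a := one_le_log3
    -- from IH : n * L n ≤ S n
    have hSn : Real.log ((n:ℝ)/2) / a * n ≤ (S n : ℝ) := by
      have := (le_div_iff₀ hn0).mp ih
      linarith
    -- pointwise bound at n+1
    have hH1 : Real.log (((n:ℝ)+1)/2) / a + 1 ≤ (H (n+1) : ℝ) := by
      have := H_real (n+1) (by omega)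
      push_cast at this
      exact this
    -- the drift term : n * (L(n+1) - L n) ≤ 1
    have hdiff : (n:ℝ) * (Real.log (((n:ℝ)+1)/2) - Real.log ((n:ℝ)/2)) ≤ 1 := by
      have hlogdiff : Real.log (((n:ℝ)+1)/2) - Real.log ((n:ℝ)/2)
          = Real.log (((n:ℝ)+1)/(n:ℝ)) := by
        rw [Real.log_div (by positivity) (by norm_num),
            Real.log_div (by positivity) (by norm_num),
            Real.log_div (by positivity) (by positivity)]
        ring
      have hle : Real.log (((n:ℝ)+1)/(n:ℝ)) ≤ 1 / n := by
        have := Real.log_le_sub_one_of_pos (show (0:ℝ) < ((n:ℝ)+1)/(n:ℝ) by positivity)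
        have heq : ((n:ℝ)+1)/(n:ℝ) - 1 = 1 / n := by field_simp; ring
        linarith
      rw [hlogdiff]
      calc (n:ℝ) * Real.log (((n:ℝ)+1)/(n:ℝ)) ≤ (n:ℝ) * (1/n) := by
            exact mul_le_mul_of_nonneg_left hle (le_of_lt hn0)
        _ = 1 := by field_simp
    -- combine
    have hcast : (S (n+1) : ℝ) = (S n : ℝ) + (H (n+1) : ℝ) := by
      rw [S_succ]; push_cast; ring
    rw [hcast]
    push_cast
    rw [le_div_iff₀ hn10]
    -- goal : L(n+1) * (n+1) ≤ S n + H (n+1)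
    have key : Real.log (((n:ℝ)+1)/2) / a * ((n:ℝ)+1)
        ≤ Real.log ((n:ℝ)/2) / a * n + 1 + (Real.log (((n:ℝ)+1)/2) / a + 1) - 1 := by
      have expand : Real.log (((n:ℝ)+1)/2) / a * ((n:ℝ)+1)
          = Real.log (((n:ℝ)+1)/2) / a * n + Real.log (((n:ℝ)+1)/2) / a := by ring
      have drift : Real.log (((n:ℝ)+1)/2) / a * n ≤ Real.log ((n:ℝ)/2) / a * n + 1 := by
        have h1 : (Real.log (((n:ℝ)+1)/2) - Real.log ((n:ℝ)/2)) * n ≤ 1 := by linarith [hdiff]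
        have h2 : (Real.log (((n:ℝ)+1)/2) - Real.log ((n:ℝ)/2)) / a * n ≤ 1 / a := by
          rw [div_mul_eq_mul_div, div_le_div_iff₀ ha0 ha0]
          nlinarith [hdiff, ha0]
        have h3 : (1:ℝ) / a ≤ 1 := by
          rw [div_le_one ha0]; exact ha1
        have h4 : Real.log (((n:ℝ)+1)/2) / a * n - Real.log ((n:ℝ)/2) / a * n
            = (Real.log (((n:ℝ)+1)/2) - Real.log ((n:ℝ)/2)) / a * n := by ring
        linarith
      linarith
    linarith [hSn, hH1, key]
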